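/- Let n ≥ 1 be an integer. Then the Douglas–Rachford operator T satisfies ‖(T T*)^n − P_{Fix T}‖ = c_F^{2n}, where ‖·‖ is the operator norm and c_F is the cosine of the Friedrichs angle between U and V. -/

import Mathlib

set_option linter.unusedSectionVars false
set_option linter.unnecessarySimpa false
set_option maxHeartbeats 1000000

noncomputable section

variable {X : Type*} [NormedAddCommGroup X] [InnerProductSpace ℝ X] [CompleteSpace X]

/-- The orthogonal projection onto a closed subspace `W`, as an operator on `X`. -/
noncomputable def proj (W : Submodule ℝ X) [W.HasOrthogonalProjection] : X →L[ℝ] X :=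
  W.subtypeL.comp (W.orthogonalProjectionOnto)

instance infHOP (U V : Submodule ℝ X) [CompleteSpace U] [CompleteSpace V] :
    Submodule.HasOrthogonalProjection (U ⊓ V) := by
  have hU : IsClosed (U : Set X) := (completeSpace_coe_iff_isComplete.mp ‹_›).isClosed
  have hV : IsClosed (V : Set X) := (completeSpace_coe_iff_isComplete.mp ‹_›).isClosed
  have : CompleteSpace (U ⊓ V : Submodule ℝ X) := (hU.inter hV).completeSpace_coe
  infer_instance

/-- The fixed point set `Fix T = {x | T x = x}` of a continuous linear operator `T`,
as a submodule of `X`. -/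
noncomputable def fixedSpace (T : X →L[ℝ] X) : Submodule ℝ X := LinearMap.ker ((T - 1 : X →L[ℝ] X) : X →ₗ[ℝ] X)

instance fixedSpaceHOP (T : X →L[ℝ] X) : Submodule.HasOrthogonalProjection (fixedSpace T) := by
  have h : IsClosed ((fixedSpace T : Submodule ℝ X) : Set X) := by
    have : ((fixedSpace T : Submodule ℝ X) : Set X) = {x | T x = x} := by
      ext x; simp [fixedSpace, LinearMap.mem_ker, sub_eq_zero]
    rw [this]
    exact isClosed_eq T.continuous continuous_id
  have : CompleteSpace (fixedSpace T) := h.completeSpace_coe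
  infer_instance

/-- The reflector `R_W = 2 P_W − Id` associated with `W`. -/
noncomputable def reflector (W : Submodule ℝ X) [W.HasOrthogonalProjection] : X →L[ℝ] X :=
  2 • proj W - 1

/-- The Douglas–Rachford operator `T = T_{V,U} = P_V (2 P_U − Id) + Id − P_U`.
(The first argument is `U`, the second is `V`.) -/
noncomputable def drOperator (U V : Submodule ℝ X) [U.HasOrthogonalProjection]
    [V.HasOrthogonalProjection] : X →L[ℝ] X :=
  proj V * (2 • proj U - 1) + 1 - proj U

/-- The cosine of the Friedrichs angle between `U` and `V`. -/
noncomputable def friedrichs (U V : Submodule ℝ X) : ℝ :=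
  sSup {c : ℝ | ∃ u v : X, u ∈ U ⊓ (U ⊓ V)ᗮ ∧ v ∈ V ⊓ (U ⊓ V)ᗮ ∧
    ‖u‖ ≤ 1 ∧ ‖v‖ ≤ 1 ∧ c = inner ℝ u v}

namespace DRAux

variable {A B C W : Submodule ℝ X}

/-! ### Basic facts about `proj` -/

lemma proj_apply_mem (W : Submodule ℝ X) [Submodule.HasOrthogonalProjection W] (x : X) :
    proj W x ∈ W := (W.orthogonalProjectionOnto x).2

lemma proj_of_mem [Submodule.HasOrthogonalProjection W] {x : X} (h : x ∈ W) : proj W x = x := by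
  exact Submodule.starProjection_eq_self_iff.mpr h

lemma sub_proj_mem [Submodule.HasOrthogonalProjection W] (x : X) : x - proj W x ∈ Wᗮ :=
  Submodule.sub_starProjection_mem_orthogonal x

lemma proj_of_mem_orth [Submodule.HasOrthogonalProjection W] {x : X} (h : x ∈ Wᗮ) : proj W x = 0 := by
  simp [proj, Submodule.orthogonalProjectionOnto_apply_of_mem_orthogonal h]

lemma proj_orthogonal (W : Submodule ℝ X) [Submodule.HasOrthogonalProjection W] :
    proj Wᗮ = 1 - proj W := by
  ext x
  rw [ContinuousLinearMap.sub_apply, ContinuousLinearMap.one_apply]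
  exact Submodule.starProjection_orthogonal_val x

lemma proj_isSelfAdjoint (W : Submodule ℝ X) [CompleteSpace W] :
    IsSelfAdjoint (proj W) := isSelfAdjoint_starProjection W

lemma star_proj (W : Submodule ℝ X) [CompleteSpace W] : star (proj W) = proj W :=
  (proj_isSelfAdjoint W).star_eq

lemma proj_comp_left (h : A ≤ B) [Submodule.HasOrthogonalProjection A] [Submodule.HasOrthogonalProjection B] :
    proj B * proj A = proj A := by
  ext x
  exact proj_of_mem (h (proj_apply_mem A x))

lemma proj_comp_right (h : A ≤ B) [Submodule.HasOrthogonalProjection A] [Submodule.HasOrthogonalProjection B] :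
    proj A * proj B = proj A := by
  ext x
  have h1 : proj A (x - proj B x) = 0 :=
    proj_of_mem_orth (Submodule.orthogonal_le h (sub_proj_mem x))
  have h2 := map_sub (proj A) x (proj B x)
  rw [h1] at h2
  have h3 := sub_eq_zero.mp h2.symm
  exact h3.symm

lemma proj_comp_ortho (h : A ≤ Bᗮ) [Submodule.HasOrthogonalProjection A] [Submodule.HasOrthogonalProjection B] :
    proj A * proj B = 0 := by
  ext x
  have hB : proj B x ∈ Aᗮ := by
    have : B ≤ Aᗮ := (Submodule.isOrtho_iff_le.mpr h).symm.le
    exact this (proj_apply_mem B x)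
  simp [proj_of_mem_orth hB]

lemma proj_idem (W : Submodule ℝ X) [Submodule.HasOrthogonalProjection W] :
    proj W * proj W = proj W := proj_comp_left le_rfl

lemma proj_mul_proj_orth (U : Submodule ℝ X) [CompleteSpace U] : proj U * proj Uᗮ = 0 :=
  proj_comp_ortho U.le_orthogonal_orthogonal

lemma proj_orth_mul_proj (U : Submodule ℝ X) [CompleteSpace U] : proj Uᗮ * proj U = 0 :=
  proj_comp_ortho le_rfl

lemma norm_sq_split (W : Submodule ℝ X) [Submodule.HasOrthogonalProjection W] (x : X) :
    ‖x‖ ^ 2 = ‖proj W x‖ ^ 2 + ‖x - proj W x‖ ^ 2 := by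
  have h0 : (inner ℝ (proj W x) (x - proj W x) : ℝ) =
    0 := Submodule.inner_right_of_mem_orthogonal (proj_apply_mem W x) (sub_proj_mem x)
  have h : x = proj W x + (x - proj W x) := by abel
  calc ‖x‖ ^ 2 = ‖proj W x + (x - proj W x)‖ ^ 2 := by rw [← h]
    _ = ‖proj W x‖ ^ 2 + 2 * inner ℝ (proj W x) (x - proj W x) + ‖x - proj W x‖ ^ 2 :=
        norm_add_sq_real _ _
    _ = _ := by rw [h0]; ring

lemma proj_norm_le (W : Submodule ℝ X) [Submodule.HasOrthogonalProjection W] (x : X) :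
    ‖proj W x‖ ≤ ‖x‖ := by
  have h := norm_sq_split W x
  nlinarith [norm_nonneg (proj W x), norm_nonneg x, sq_nonneg ‖x - proj W x‖]

lemma inner_proj_self (W : Submodule ℝ X) [Submodule.HasOrthogonalProjection W] (x : X) :
    (inner ℝ (proj W x) x : ℝ) = ‖proj W x‖ ^ 2 := by
  have h0 : (inner ℝ (proj W x) (x - proj W x) : ℝ) =
    0 := Submodule.inner_right_of_mem_orthogonal (proj_apply_mem W x) (sub_proj_mem x)
  have h1 : proj W x + (x - proj W x) = x := by abel
  calc (inner ℝ (proj W x) x : ℝ)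
      = inner ℝ (proj W x) (proj W x + (x - proj W x)) := by rw [h1]
    _ = inner ℝ (proj W x) (proj W x) + inner ℝ (proj W x) (x - proj W x) :=
        inner_add_right _ _ _
    _ = ‖proj W x‖ ^ 2 := by rw [h0, add_zero, real_inner_self_eq_norm_sq]

lemma proj_split (hCW : C ≤ W) [Submodule.HasOrthogonalProjection C] [Submodule.HasOrthogonalProjection W]
    [Submodule.HasOrthogonalProjection (W ⊓ Cᗮ)] :
    proj W = proj C + proj (W ⊓ Cᗮ) := by
  ext x
  have hv : proj C x + proj (W ⊓ Cᗮ) x ∈ W :=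
    add_mem (hCW (proj_apply_mem C x)) ((inf_le_left : W ⊓ Cᗮ ≤ W) (proj_apply_mem (W ⊓ Cᗮ) x))
  have hvo : x - (proj C x + proj (W ⊓ Cᗮ) x) ∈ Wᗮ := by
    rw [Submodule.mem_orthogonal]
    intro w hw
    have hw1 : w - proj C w ∈ W ⊓ Cᗮ :=
      ⟨sub_mem hw (hCW (proj_apply_mem C w)), sub_proj_mem w⟩
    have e1 : (inner ℝ (proj C w) (x - proj C x) : ℝ) = 0 :=
      Submodule.inner_right_of_mem_orthogonal (proj_apply_mem C w) (sub_proj_mem x)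
    have e2 : (inner ℝ (proj C w) (proj (W ⊓ Cᗮ) x) : ℝ) = 0 :=
      Submodule.inner_right_of_mem_orthogonal (proj_apply_mem C w)
        ((inf_le_right : W ⊓ Cᗮ ≤ Cᗮ) (proj_apply_mem (W ⊓ Cᗮ) x))
    have e3 : (inner ℝ (w - proj C w) (x - proj (W ⊓ Cᗮ) x) : ℝ) =
        0 := Submodule.inner_right_of_mem_orthogonal hw1 (sub_proj_mem x)
    have e4 : (inner ℝ (w - proj C w) (proj C x) : ℝ) = 0 :=
      Submodule.inner_left_of_mem_orthogonal (proj_apply_mem C x) hw1.2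
    have hw' : w = proj C w + (w - proj C w) := by abel
    rw [hw']
    rw [inner_add_left]
    have r1 : (inner ℝ (proj C w) (x - (proj C x + proj (W ⊓ Cᗮ) x)) : ℝ) = 0 := by
      rw [show x - (proj C x + proj (W ⊓ Cᗮ) x) = (x - proj C x) - proj (W ⊓ Cᗮ) x by abel,
        inner_sub_right, e1, e2, sub_zero]
    have r2 : (inner ℝ (w - proj C w) (x - (proj C x + proj (W ⊓ Cᗮ) x)) : ℝ) = 0 := by
      rw [show x - (proj C x + proj (W ⊓ Cᗮ) x) = (x - proj (W ⊓ Cᗮ) x) - proj C x by abel,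
        inner_sub_right, e3, e4, sub_zero]
    rw [r1, r2, add_zero]
  exact Submodule.eq_starProjection_of_mem_orthogonal hv hvo

lemma isClosed_submod (W : Submodule ℝ X) [CompleteSpace W] : IsClosed (W : Set X) :=
  (completeSpace_coe_iff_isComplete.mp ‹_›).isClosed

lemma completeSpace_inf_orth (U W : Submodule ℝ X) [CompleteSpace U] :
    CompleteSpace (U ⊓ Wᗮ : Submodule ℝ X) :=
  ((isClosed_submod U).inter (Submodule.isClosed_orthogonal W)).completeSpace_coe

/-! ### The Douglas–Rachford operator -/

lemma mem_fixedSpace_iff {T : X →L[ℝ] X} {x : X} : x ∈ fixedSpace T ↔ T x = x := by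
  simp [fixedSpace, LinearMap.mem_ker, sub_eq_zero]

lemma drOperator_eq (U V : Submodule ℝ X) [CompleteSpace U] [CompleteSpace V] :
    drOperator U V = proj V * proj U + proj Vᗮ * proj Uᗮ := by
  rw [proj_orthogonal U, proj_orthogonal V, drOperator]
  noncomm_ring

lemma ring_helper {R : Type*} [Ring R] {u v u' v' : R} (huu : u * u = u) (hu'u' : u' * u' = u')
    (h1 : u * u' = 0) (h2 : u' * u = 0) :
    (v * u + v' * u') * (u * v + u' * v') = v * u * v + v' * u' * v' := by
  have e1 : v * u * (u * v) = v * u * v := by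
    rw [mul_assoc v u (u * v), ← mul_assoc u u v, huu, ← mul_assoc]
  have e2 : v * u * (u' * v') = 0 := by
    rw [mul_assoc v u _, ← mul_assoc u u' v', h1, zero_mul, mul_zero]
  have e3 : v' * u' * (u * v) = 0 := by
    rw [mul_assoc v' u' _, ← mul_assoc u' u v, h2, zero_mul, mul_zero]
  have e4 : v' * u' * (u' * v') = v' * u' * v' := by
    rw [mul_assoc v' u' (u' * v'), ← mul_assoc u' u' v', hu'u', ← mul_assoc]
  rw [add_mul, mul_add, mul_add, e1, e2, e3, e4, add_zero, zero_add]

lemma drOperator_mul_star (U V : Submodule ℝ X) [CompleteSpace U] [CompleteSpace V] :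
    drOperator U V * star (drOperator U V) =
      proj V * proj U * proj V + proj Vᗮ * proj Uᗮ * proj Vᗮ := by
  rw [drOperator_eq, star_add, star_mul, star_mul, star_proj, star_proj, star_proj, star_proj]
  exact ring_helper (proj_idem U) (proj_idem Uᗮ) (proj_mul_proj_orth U) (proj_orth_mul_proj U)

lemma mem_fixedSpace_of_inf {x : X} (U V : Submodule ℝ X) [CompleteSpace U] [CompleteSpace V]
    (h : x ∈ U ⊓ V) : x ∈ fixedSpace (drOperator U V) := by
  rw [mem_fixedSpace_iff, drOperator_eq]
  have h1 : proj U x = x := proj_of_mem h.1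
  have h2 : proj Uᗮ x = 0 := proj_of_mem_orth (U.le_orthogonal_orthogonal h.1)
  simp [ContinuousLinearMap.mul_apply, h1, h2, proj_of_mem h.2]

lemma mem_fixedSpace_of_inf_orth {x : X} (U V : Submodule ℝ X) [CompleteSpace U] [CompleteSpace V]
    (h : x ∈ Uᗮ ⊓ Vᗮ) : x ∈ fixedSpace (drOperator U V) := by
  rw [mem_fixedSpace_iff, drOperator_eq]
  have h1 : proj U x = 0 := proj_of_mem_orth h.1
  have h2 : proj Uᗮ x = x := proj_of_mem h.1
  simp [ContinuousLinearMap.mul_apply, h1, h2, proj_of_mem h.2]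

lemma fixedSpace_decomp {x : X} (U V : Submodule ℝ X) [CompleteSpace U] [CompleteSpace V]
    (h : x ∈ fixedSpace (drOperator U V)) :
    proj U x ∈ U ⊓ V ∧ proj Uᗮ x ∈ Uᗮ ⊓ Vᗮ := by
  rw [mem_fixedSpace_iff, drOperator_eq] at h
  set p := proj U x with hp
  set q := proj Uᗮ x with hq
  have hx : proj V p + proj Vᗮ q = x := h
  have hpq : q = x - p := by rw [hq, proj_orthogonal]; simp; rfl
  have ho : (inner ℝ (proj V p) (proj Vᗮ q) : ℝ) =
      0 := Submodule.inner_right_of_mem_orthogonal (proj_apply_mem V p) (proj_apply_mem Vᗮ q)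
  have n1 : ‖x‖ ^ 2 = ‖proj V p‖ ^ 2 + ‖proj Vᗮ q‖ ^ 2 := by
    calc ‖x‖ ^ 2 = ‖proj V p + proj Vᗮ q‖ ^ 2 := by rw [hx]
      _ = ‖proj V p‖ ^ 2 + 2 * inner ℝ (proj V p) (proj Vᗮ q) + ‖proj Vᗮ q‖ ^ 2 :=
          norm_add_sq_real _ _
      _ = _ := by rw [ho]; ring
  have n2 : ‖x‖ ^ 2 = ‖p‖ ^ 2 + ‖q‖ ^ 2 := by
    have := norm_sq_split U x
    rwa [← hp, ← hpq] at this
  have d1 : ‖p‖ ^ 2 = ‖proj V p‖ ^ 2 + ‖p - proj V p‖ ^ 2 := norm_sq_split V p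
  have d2 : ‖q‖ ^ 2 = ‖proj Vᗮ q‖ ^ 2 + ‖q - proj Vᗮ q‖ ^ 2 := norm_sq_split Vᗮ q
  have m1 : p ∈ V := by
    have h0 : p - proj V p = 0 := by
      rw [← norm_eq_zero]
      nlinarith [norm_nonneg (p - proj V p), sq_nonneg ‖q - proj Vᗮ q‖,
        sq_nonneg ‖p - proj V p‖]
    exact (sub_eq_zero.mp h0) ▸ proj_apply_mem V p
  have m2 : q ∈ Vᗮ := by
    have h0 : q - proj Vᗮ q = 0 := by
      rw [← norm_eq_zero]
      nlinarith [norm_nonneg (q - proj Vᗮ q), sq_nonneg ‖q - proj Vᗮ q‖,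
        sq_nonneg ‖p - proj V p‖]
    exact (sub_eq_zero.mp h0) ▸ proj_apply_mem Vᗮ q
  exact ⟨⟨proj_apply_mem U x, m1⟩, ⟨proj_apply_mem Uᗮ x, m2⟩⟩

lemma proj_fixedSpace (U V : Submodule ℝ X) [CompleteSpace U] [CompleteSpace V] :
    proj (fixedSpace (drOperator U V)) = proj (U ⊓ V) + proj (Uᗮ ⊓ Vᗮ) := by
  ext x
  set C := U ⊓ V
  set D := Uᗮ ⊓ Vᗮ
  have hv : proj C x + proj D x ∈ fixedSpace (drOperator U V) := by
    rw [mem_fixedSpace_iff]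
    have h1 := mem_fixedSpace_iff.mp (mem_fixedSpace_of_inf U V (proj_apply_mem C x))
    have h2 := mem_fixedSpace_iff.mp (mem_fixedSpace_of_inf_orth U V (proj_apply_mem D x))
    rw [map_add, h1, h2]
  have hvo : x - (proj C x + proj D x) ∈ (fixedSpace (drOperator U V))ᗮ := by
    rw [Submodule.mem_orthogonal]
    intro f hf
    obtain ⟨hfp, hfq⟩ := fixedSpace_decomp U V hf
    have hfeq : f = proj U f + proj Uᗮ f := by
      rw [proj_orthogonal]
      simp
    have e1 : (inner ℝ (proj U f) (x - (proj C x + proj D x)) : ℝ) = 0 := by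
      rw [show x - (proj C x + proj D x) = (x - proj C x) - proj D x by abel, inner_sub_right]
      rw [Submodule.inner_right_of_mem_orthogonal hfp (sub_proj_mem x),
        Submodule.inner_right_of_mem_orthogonal hfp.1
          ((inf_le_left : Uᗮ ⊓ Vᗮ ≤ Uᗮ) (proj_apply_mem D x)), sub_zero]
    have e2 : (inner ℝ (proj Uᗮ f) (x - (proj C x + proj D x)) : ℝ) = 0 := by
      rw [show x - (proj C x + proj D x) = (x - proj D x) - proj C x by abel, inner_sub_right]
      rw [Submodule.inner_right_of_mem_orthogonal hfq (sub_proj_mem x),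
        Submodule.inner_left_of_mem_orthogonal
          ((inf_le_left : U ⊓ V ≤ U) (proj_apply_mem C x)) hfq.1, sub_zero]
    rw [hfeq, inner_add_left, e1, e2, add_zero]
  exact Submodule.eq_starProjection_of_mem_orthogonal hv hvo

/-! ### Power computations -/

lemma pow_mul_idem {R : Type*} [Ring R] {a p : R} (hap : a * p = p) :
    ∀ n : ℕ, a ^ n * p = p := by
  intro n
  induction n with
  | zero => simp
  | succ k ih => rw [pow_succ, mul_assoc, hap, ih]

lemma sub_idem_pow {R : Type*} [Ring R] {a p : R} (hap : a * p = p) (hpa : p * a = p)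
    (hpp : p * p = p) {n : ℕ} (hn : 1 ≤ n) : (a - p) ^ n = a ^ n - p := by
  induction n, hn using Nat.le_induction with
  | base => simp
  | succ k hk ih =>
    rw [pow_succ, ih, sub_mul, mul_sub, mul_sub, pow_succ, pow_mul_idem hap, hpa, hpp]
    abel

lemma mul_pow_eq_zero {R : Type*} [Ring R] {a b : R} (hab : a * b = 0) :
    ∀ n : ℕ, 1 ≤ n → a ^ n * b = 0 := by
  intro n hn
  induction n, hn using Nat.le_induction with
  | base => simpa
  | succ k hk ih => rw [pow_succ, mul_assoc, hab, mul_zero]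

lemma add_pow_of_mul_eq_zero {R : Type*} [Ring R] {a b : R} (hab : a * b = 0) (hba : b * a = 0)
    {n : ℕ} (hn : 1 ≤ n) : (a + b) ^ n = a ^ n + b ^ n := by
  induction n, hn using Nat.le_induction with
  | base => simp
  | succ k hk ih =>
    rw [pow_succ, ih, add_mul, mul_add, mul_add, pow_succ, pow_succ,
      mul_pow_eq_zero hab k hk, mul_pow_eq_zero hba k hk]
    abel

lemma norm_pow_self_adjoint {a : X →L[ℝ] X} (ha : IsSelfAdjoint a) {n : ℕ} (hn : 1 ≤ n) :
    ‖a ^ n‖ = ‖a‖ ^ n := by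
  rcases eq_or_ne ‖a‖ 0 with h0 | h0
  · have ha0 : a = 0 := norm_eq_zero.mp h0
    simp [ha0, zero_pow (show n ≠ 0 by omega)]
  · have hpos : 0 < ‖a‖ := lt_of_le_of_ne (norm_nonneg a) (Ne.symm h0)
    refine le_antisymm (norm_pow_le' a (by omega)) ?_
    have hlt : n < 2 ^ n := Nat.lt_two_pow_self
    have h2 : ‖a ^ 2 ^ n‖ = ‖a‖ ^ 2 ^ n := by
      have h : ‖a ^ 2 ^ n‖₊ = ‖a‖₊ ^ 2 ^ n := ha.nnnorm_pow_two_pow n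
      have h2' := congrArg NNReal.toReal h
      push_cast at h2'
      exact h2'
    have hsplit : a ^ 2 ^ n = a ^ n * a ^ (2 ^ n - n) := by
      rw [← pow_add]; congr 1; omega
    have hb : ‖a ^ 2 ^ n‖ ≤ ‖a ^ n‖ * ‖a‖ ^ (2 ^ n - n) := by
      calc ‖a ^ 2 ^ n‖ ≤ ‖a ^ n‖ * ‖a ^ (2 ^ n - n)‖ := by rw [hsplit]; exact norm_mul_le _ _
        _ ≤ ‖a ^ n‖ * ‖a‖ ^ (2 ^ n - n) := by
            exact mul_le_mul_of_nonneg_left (norm_pow_le' a (by omega)) (norm_nonneg _)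
    have hsplit2 : ‖a‖ ^ 2 ^ n = ‖a‖ ^ n * ‖a‖ ^ (2 ^ n - n) := by
      rw [← pow_add]; congr 1; omega
    have hq : 0 < ‖a‖ ^ (2 ^ n - n) := pow_pos hpos _
    nlinarith [hb, h2, hsplit2]

lemma sq_le_of_norms {r s : ℝ} (hs : 0 ≤ s) (h : r ^ 2 ≤ s ^ 2) (hr : 0 ≤ r) : r ≤ s := by
  nlinarith

/-! ### Norm of a sum of operators with orthogonal ranges -/

lemma norm_add_orthogonal {V : Submodule ℝ X} [CompleteSpace V] {S₁ S₂ : X →L[ℝ] X}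
    (h₁ : ∀ x, S₁ x ∈ V) (h₂ : ∀ x, S₂ x ∈ Vᗮ)
    (k₁ : S₁ * proj V = S₁) (k₂ : S₂ * proj Vᗮ = S₂) :
    ‖S₁ + S₂‖ = max ‖S₁‖ ‖S₂‖ := by
  have hVo : ∀ x, proj Vᗮ x = x - proj V x := by
    intro x; rw [proj_orthogonal]; simp
  have horth : ∀ x, ‖S₁ x + S₂ x‖ ^ 2 = ‖S₁ x‖ ^ 2 + ‖S₂ x‖ ^ 2 := by
    intro x
    have h0 : (inner ℝ (S₁ x) (S₂ x) : ℝ) = 0 :=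
      Submodule.inner_right_of_mem_orthogonal (h₁ x) (h₂ x)
    rw [norm_add_sq_real, h0]; ring
  apply le_antisymm
  · apply ContinuousLinearMap.opNorm_le_bound _
      (le_max_iff.mpr (Or.inl (norm_nonneg S₁)))
    intro x
    have e1 : ‖S₁ x‖ ≤ ‖S₁‖ * ‖proj V x‖ := by
      conv_lhs => rw [← k₁]
      exact (S₁.le_opNorm _)
    have e2 : ‖S₂ x‖ ≤ ‖S₂‖ * ‖proj Vᗮ x‖ := by
      conv_lhs => rw [← k₂]
      exact (S₂.le_opNorm _)
    have e3 : ‖proj V x‖ ^ 2 + ‖proj Vᗮ x‖ ^ 2 = ‖x‖ ^ 2 := by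
      rw [hVo x]; exact (norm_sq_split V x).symm
    have hsq : ‖(S₁ + S₂) x‖ ^ 2 ≤ (max ‖S₁‖ ‖S₂‖ * ‖x‖) ^ 2 := by
      have hm1 : ‖S₁‖ ≤ max ‖S₁‖ ‖S₂‖ := le_max_left _ _
      have hm2 : ‖S₂‖ ≤ max ‖S₁‖ ‖S₂‖ := le_max_right _ _
      have f1 : ‖S₁ x‖ ^ 2 ≤ (max ‖S₁‖ ‖S₂‖ * ‖proj V x‖) ^ 2 := by
        have g1 : ‖S₁‖ * ‖proj V x‖ ≤ max ‖S₁‖ ‖S₂‖ * ‖proj V x‖ :=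
          mul_le_mul_of_nonneg_right hm1 (norm_nonneg _)
        exact pow_le_pow_left₀ (norm_nonneg _) (e1.trans g1) 2
      have f2 : ‖S₂ x‖ ^ 2 ≤ (max ‖S₁‖ ‖S₂‖ * ‖proj Vᗮ x‖) ^ 2 := by
        have g2 : ‖S₂‖ * ‖proj Vᗮ x‖ ≤ max ‖S₁‖ ‖S₂‖ * ‖proj Vᗮ x‖ :=
          mul_le_mul_of_nonneg_right hm2 (norm_nonneg _)
        exact pow_le_pow_left₀ (norm_nonneg _) (e2.trans g2) 2
      have e4 : (max ‖S₁‖ ‖S₂‖ * ‖proj V x‖) ^ 2 + (max ‖S₁‖ ‖S₂‖ * ‖proj Vᗮ x‖) ^ 2 =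
          (max ‖S₁‖ ‖S₂‖ * ‖x‖) ^ 2 := by
        have : (max ‖S₁‖ ‖S₂‖ * ‖proj V x‖) ^ 2 + (max ‖S₁‖ ‖S₂‖ * ‖proj Vᗮ x‖) ^ 2 =
            max ‖S₁‖ ‖S₂‖ ^ 2 * (‖proj V x‖ ^ 2 + ‖proj Vᗮ x‖ ^ 2) := by ring
        rw [this, e3]; ring
      have := horth x
      rw [ContinuousLinearMap.add_apply, this]
      linarith [f1, f2, e4]
    exact sq_le_of_norms (mul_nonneg (le_max_iff.mpr (Or.inl (norm_nonneg S₁)))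
      (norm_nonneg x)) hsq (norm_nonneg _)
  · apply max_le
    · apply ContinuousLinearMap.opNorm_le_bound _ (norm_nonneg (S₁ + S₂))
      intro x
      have hsq : ‖S₁ x‖ ^ 2 ≤ (‖S₁ + S₂‖ * ‖x‖) ^ 2 := by
        have h := horth x
        have h2 := (S₁ + S₂).le_opNorm x
        rw [ContinuousLinearMap.add_apply] at h2
        nlinarith [sq_nonneg ‖S₂ x‖, norm_nonneg (S₁ x + S₂ x), norm_nonneg x,
          norm_nonneg (S₁ + S₂)]
      exact sq_le_of_norms (mul_nonneg (norm_nonneg _) (norm_nonneg x)) hsq (norm_nonneg _)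
    · apply ContinuousLinearMap.opNorm_le_bound _ (norm_nonneg (S₁ + S₂))
      intro x
      have hsq : ‖S₂ x‖ ^ 2 ≤ (‖S₁ + S₂‖ * ‖x‖) ^ 2 := by
        have h := horth x
        have h2 := (S₁ + S₂).le_opNorm x
        rw [ContinuousLinearMap.add_apply] at h2
        nlinarith [sq_nonneg ‖S₁ x‖, norm_nonneg (S₁ x + S₂ x), norm_nonneg x,
          norm_nonneg (S₁ + S₂)]
      exact sq_le_of_norms (mul_nonneg (norm_nonneg _) (norm_nonneg x)) hsq (norm_nonneg _)

/-! ### The Friedrichs angle as an operator norm, and duality -/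

lemma friedrichs_eq (U V : Submodule ℝ X) [CompleteSpace U] [CompleteSpace V] :
    friedrichs U V = ‖proj (U ⊓ (U ⊓ V)ᗮ) * proj (V ⊓ (U ⊓ V)ᗮ)‖ := by
  classical
  set M := U ⊓ (U ⊓ V)ᗮ
  set N := V ⊓ (U ⊓ V)ᗮ
  set S : Set ℝ := {c : ℝ | ∃ u v : X, u ∈ M ∧ v ∈ N ∧ ‖u‖ ≤ 1 ∧ ‖v‖ ≤ 1 ∧ c = inner ℝ u v}
  have h0S : (0 : ℝ) ∈ S := ⟨0, 0, zero_mem M, zero_mem N, by simp, by simp, by simp⟩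
  have hub : ∀ c ∈ S, c ≤ ‖proj M * proj N‖ := by
    rintro c ⟨u, v, hu, hv, hnu, hnv, rfl⟩
    have h1 : (inner ℝ u v : ℝ) = inner ℝ u ((proj M * proj N) v) := by
      have e1 : (inner ℝ u (v - proj M v) : ℝ) = 0 :=
        Submodule.inner_right_of_mem_orthogonal hu (sub_proj_mem v)
      have e2 : (inner ℝ u v : ℝ) = inner ℝ u (proj M v) := by
        have := inner_sub_right (𝕜 := ℝ) u v (proj M v)
        rw [e1] at this
        linarith [this]
      rw [e2, ContinuousLinearMap.mul_apply, proj_of_mem hv]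
    rw [h1]
    calc (inner ℝ u ((proj M * proj N) v) : ℝ) ≤ ‖u‖ * ‖(proj M * proj N) v‖ :=
          real_inner_le_norm _ _
      _ ≤ 1 * (‖proj M * proj N‖ * ‖v‖) := by
          apply mul_le_mul hnu ((proj M * proj N).le_opNorm v) (norm_nonneg _) zero_le_one
      _ ≤ 1 * (‖proj M * proj N‖ * 1) := by
          apply mul_le_mul_of_nonneg_left
            (mul_le_mul_of_nonneg_left hnv (norm_nonneg _)) zero_le_one
      _ = ‖proj M * proj N‖ := by ring
  have hbdd : BddAbove S := ⟨‖proj M * proj N‖, hub⟩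
  have hSup0 : 0 ≤ sSup S := le_csSup hbdd h0S
  apply le_antisymm (csSup_le ⟨0, h0S⟩ hub)
  apply ContinuousLinearMap.opNorm_le_bound _ hSup0
  intro x
  rcases eq_or_ne x 0 with rfl | hx
  · simp
  have hxpos : 0 < ‖x‖ := norm_pos_iff.mpr hx
  set y := (proj M * proj N) x with hy
  rcases eq_or_ne y 0 with hy0 | hy0
  · rw [hy0]; simp; positivity
  have hypos : 0 < ‖y‖ := norm_pos_iff.mpr hy0
  set u := ‖y‖⁻¹ • y with hu
  set v := ‖x‖⁻¹ • (proj N x) with hv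
  have humem : u ∈ M := Submodule.smul_mem _ _ (proj_apply_mem M _)
  have hvmem : v ∈ N := Submodule.smul_mem _ _ (proj_apply_mem N _)
  have hnu : ‖u‖ ≤ 1 := by
    rw [hu, norm_smul, norm_inv, norm_norm]
    rw [inv_mul_cancel₀ (ne_of_gt hypos)]
  have hnv : ‖v‖ ≤ 1 := by
    rw [hv, norm_smul, norm_inv, norm_norm]
    rw [inv_mul_le_one₀ hxpos]
    exact proj_norm_le N x
  have hin : (inner ℝ u v : ℝ) = ‖y‖ / ‖x‖ := by
    rw [hu, hv, real_inner_smul_left, real_inner_smul_right]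
    have : (inner ℝ y (proj N x) : ℝ) = ‖y‖ ^ 2 := by
      rw [hy, ContinuousLinearMap.mul_apply]
      exact inner_proj_self M (proj N x)
    rw [this]
    field_simp
  have hmem : (‖y‖ / ‖x‖ : ℝ) ∈ S := ⟨u, v, humem, hvmem, hnu, hnv, hin.symm⟩
  have := le_csSup hbdd hmem
  rw [div_le_iff₀ hxpos] at this
  exact this

lemma friedrichs_nonneg (U V : Submodule ℝ X) [CompleteSpace U] [CompleteSpace V] :
    0 ≤ friedrichs U V := by rw [friedrichs_eq]; exact norm_nonneg _

lemma friedrichs_le_orth (U V : Submodule ℝ X) [CompleteSpace U] [CompleteSpace V] :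
    friedrichs Uᗮ Vᗮ ≤ friedrichs U V := by
  classical
  set c := friedrichs U V with hc
  have hc0 : 0 ≤ c := friedrichs_nonneg U V
  set M := U ⊓ (U ⊓ V)ᗮ
  set N := V ⊓ (U ⊓ V)ᗮ
  have hcnorm : c = ‖proj M * proj N‖ := friedrichs_eq U V
  refine csSup_le ⟨(0 : ℝ), ⟨0, 0, zero_mem _, zero_mem _, by simp, by simp, by simp⟩⟩ ?_
  rintro r ⟨u, v, hu, hv, hnu, hnv, rfl⟩
  rcases le_or_gt 1 c with hc1 | hc1
  · calc (inner ℝ u v : ℝ) ≤ ‖u‖ * ‖v‖ := real_inner_le_norm u v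
      _ ≤ 1 := mul_le_one₀ hnu (norm_nonneg v) hnv
      _ ≤ c := hc1
  have hKey : ‖u - proj V u‖ ^ 2 ≤ c ^ 2 * ‖u‖ ^ 2 := by
    have hZ : ∀ z ∈ (U ⊔ V : Submodule ℝ X),
        (1 - c ^ 2) * (inner ℝ u z : ℝ) ^ 2 ≤ ‖proj V u‖ ^ 2 * ‖z‖ ^ 2 := by
      intro z hz
      obtain ⟨m, hm, n, hn, rfl⟩ := Submodule.mem_sup.mp hz
      set Cuv := U ⊓ V with hCuv
      set m₀ := m - proj Cuv m with hm₀
      set n' := n + proj Cuv m with hn'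
      set q := n' - proj Cuv n' with hq
      set e := proj Cuv n' with he
      have hm₀M : m₀ ∈ M :=
        ⟨sub_mem hm ((inf_le_left : U ⊓ V ≤ U) (proj_apply_mem Cuv m)), sub_proj_mem m⟩
      have hn'V : n' ∈ V := add_mem hn ((inf_le_right : U ⊓ V ≤ V) (proj_apply_mem Cuv m))
      have hqN : q ∈ N :=
        ⟨sub_mem hn'V ((inf_le_right : U ⊓ V ≤ V) (proj_apply_mem Cuv n')), sub_proj_mem n'⟩
      have heC : e ∈ Cuv := proj_apply_mem Cuv n'
      have hsplit : m + n = e + (m₀ + q) := by rw [hm₀, hq, hn', he]; abel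
      have hiu : (inner ℝ u (m + n) : ℝ) = inner ℝ (proj V u) q := by
        have i1 : (inner ℝ u m₀ : ℝ) = 0 :=
          Submodule.inner_left_of_mem_orthogonal hm₀M.1 hu.1
        have i2 : (inner ℝ u e : ℝ) = 0 :=
          Submodule.inner_left_of_mem_orthogonal ((inf_le_left : U ⊓ V ≤ U) heC) hu.1
        have i3 : (inner ℝ (u - proj V u) q : ℝ) = 0 :=
          Submodule.inner_left_of_mem_orthogonal hqN.1 (sub_proj_mem u)
        have i4 : (inner ℝ u q : ℝ) = inner ℝ (proj V u) q := by
          have := inner_sub_left (𝕜 := ℝ) u (proj V u) q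
          rw [i3] at this
          linarith [this]
        rw [hsplit, inner_add_right, inner_add_right, i1, i2, i4]
        ring
      have hiq : |(inner ℝ m₀ q : ℝ)| ≤ c * (‖m₀‖ * ‖q‖) := by
        have j1 : (inner ℝ m₀ (q - proj M q) : ℝ) = 0 :=
          Submodule.inner_right_of_mem_orthogonal hm₀M (sub_proj_mem q)
        have j2 : (inner ℝ m₀ q : ℝ) = inner ℝ m₀ ((proj M * proj N) q) := by
          have := inner_sub_right (𝕜 := ℝ) m₀ q (proj M q)
          rw [j1] at this
          have j3 : (inner ℝ m₀ q : ℝ) = inner ℝ m₀ (proj M q) := by linarith [this]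
          rw [j3, ContinuousLinearMap.mul_apply, proj_of_mem hqN]
        calc |(inner ℝ m₀ q : ℝ)| = |(inner ℝ m₀ ((proj M * proj N) q) : ℝ)| := by rw [j2]
          _ ≤ ‖m₀‖ * ‖(proj M * proj N) q‖ := abs_real_inner_le_norm _ _
          _ ≤ ‖m₀‖ * (‖proj M * proj N‖ * ‖q‖) :=
              mul_le_mul_of_nonneg_left ((proj M * proj N).le_opNorm q) (norm_nonneg _)
          _ = c * (‖m₀‖ * ‖q‖) := by rw [hcnorm]; ring
      have hzsq : (1 - c ^ 2) * ‖q‖ ^ 2 ≤ ‖m + n‖ ^ 2 := by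
        have o1 : (inner ℝ e (m₀ + q) : ℝ) = 0 := by
          have : m₀ + q ∈ Cuvᗮ := add_mem hm₀M.2 hqN.2
          exact Submodule.inner_right_of_mem_orthogonal heC this
        have n1 : ‖m + n‖ ^ 2 = ‖e‖ ^ 2 + ‖m₀ + q‖ ^ 2 := by
          rw [hsplit, norm_add_sq_real, o1]; ring
        have n2 : ‖m₀ + q‖ ^ 2 = ‖m₀‖ ^ 2 + 2 * inner ℝ m₀ q + ‖q‖ ^ 2 :=
          norm_add_sq_real _ _
        nlinarith [sq_nonneg (‖m₀‖ - c * ‖q‖), neg_abs_le (inner ℝ m₀ q : ℝ), hiq,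
          sq_nonneg ‖e‖]
      have hiqsq : (inner ℝ u (m + n) : ℝ) ^ 2 ≤ ‖proj V u‖ ^ 2 * ‖q‖ ^ 2 := by
        rw [hiu]
        have := abs_real_inner_le_norm (proj V u) q
        nlinarith [this, abs_nonneg (inner ℝ (proj V u) q : ℝ), sq_abs (inner ℝ (proj V u) q : ℝ)]
      have hcsq : (0 : ℝ) ≤ 1 - c ^ 2 := by nlinarith
      have k1 : (1 - c ^ 2) * (inner ℝ u (m + n) : ℝ) ^ 2 ≤
          (1 - c ^ 2) * (‖proj V u‖ ^ 2 * ‖q‖ ^ 2) := mul_le_mul_of_nonneg_left hiqsq hcsq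
      have k2 : ‖proj V u‖ ^ 2 * ((1 - c ^ 2) * ‖q‖ ^ 2) ≤ ‖proj V u‖ ^ 2 * ‖m + n‖ ^ 2 :=
        mul_le_mul_of_nonneg_left hzsq (sq_nonneg _)
      nlinarith [k1, k2]
    have hUclosed : u ∈ closure ((U ⊔ V : Submodule ℝ X) : Set X) := by
      have hD : (Uᗮ ⊓ Vᗮ : Submodule ℝ X) = (U ⊔ V)ᗮ := Submodule.inf_orthogonal U V
      have h1 : u ∈ (U ⊔ V)ᗮᗮ := by rw [← hD]; exact hu.2
      rw [Submodule.orthogonal_orthogonal_eq_closure] at h1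
      exact h1
    have hcl : ∀ z ∈ closure ((U ⊔ V : Submodule ℝ X) : Set X),
        (1 - c ^ 2) * (inner ℝ u z : ℝ) ^ 2 ≤ ‖proj V u‖ ^ 2 * ‖z‖ ^ 2 := by
      intro z hz
      have hclosed : IsClosed {z : X |
          (1 - c ^ 2) * (inner ℝ u z : ℝ) ^ 2 ≤ ‖proj V u‖ ^ 2 * ‖z‖ ^ 2} := by
        apply isClosed_le
        · exact (continuous_const.mul (((continuous_const.inner continuous_id)).pow 2))
        · exact continuous_const.mul ((continuous_norm.pow 2))
      exact closure_minimal hZ hclosed hz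
    have hself := hcl u hUclosed
    rw [real_inner_self_eq_norm_sq] at hself
    have hns := norm_sq_split V u
    rcases eq_or_ne u 0 with rfl | hu0
    · simp
    · have hupos : 0 < ‖u‖ := norm_pos_iff.mpr hu0
      nlinarith [hself, hns, sq_nonneg ‖u‖, pow_pos hupos 2]
  have hiv : (inner ℝ u v : ℝ) = inner ℝ (u - proj V u) v := by
    have i0 : (inner ℝ (proj V u) v : ℝ) =
        0 := Submodule.inner_right_of_mem_orthogonal (proj_apply_mem V u) hv.1
    have := inner_sub_left (𝕜 := ℝ) u (proj V u) v
    rw [i0] at this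
    linarith [this]
  have hb : ‖u - proj V u‖ ≤ c * ‖u‖ := by
    apply sq_le_of_norms (mul_nonneg hc0 (norm_nonneg u)) _ (norm_nonneg _)
    calc ‖u - proj V u‖ ^ 2 ≤ c ^ 2 * ‖u‖ ^ 2 := hKey
      _ = (c * ‖u‖) ^ 2 := by ring
  calc (inner ℝ u v : ℝ) = inner ℝ (u - proj V u) v := hiv
    _ ≤ ‖u - proj V u‖ * ‖v‖ := real_inner_le_norm _ _
    _ ≤ (c * ‖u‖) * 1 := by
        apply mul_le_mul hb hnv (norm_nonneg v)
        exact mul_nonneg hc0 (norm_nonneg u)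
    _ ≤ c * 1 * 1 := by
        have := mul_le_mul_of_nonneg_left hnu hc0
        nlinarith [this]
    _ = c := by ring

lemma friedrichs_orth (U V : Submodule ℝ X) [CompleteSpace U] [CompleteSpace V] :
    friedrichs Uᗮ Vᗮ = friedrichs U V := by
  apply le_antisymm (friedrichs_le_orth U V)
  have := friedrichs_le_orth Uᗮ Vᗮ
  rwa [Submodule.orthogonal_orthogonal, Submodule.orthogonal_orthogonal] at this

/-! ### The sandwich operators -/

lemma sandwich_ring {R : Type*} [Ring R] {c m n : R} (hcm : c * m = 0) (hmc : m * c = 0)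
    (hcn : c * n = 0) (hnc : n * c = 0) (hcc : c * c = c) :
    (c + n) * (c + m) * (c + n) - c = n * m * n := by
  have e1 : (c + n) * (c + m) = c + n * m := by
    rw [add_mul, mul_add, mul_add, hcc, hcm, hnc]
    abel
  rw [e1, add_mul, mul_add, mul_add, hcc, hcn, mul_assoc n m c, hmc, mul_zero]
  abel

lemma sandwich_eq (U V : Submodule ℝ X) [CompleteSpace U] [CompleteSpace V] :
    proj V * proj U * proj V - proj (U ⊓ V) =
      proj (V ⊓ (U ⊓ V)ᗮ) * proj (U ⊓ (U ⊓ V)ᗮ) * proj (V ⊓ (U ⊓ V)ᗮ) := by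
  set Cuv := U ⊓ V
  set M := U ⊓ Cuvᗮ
  set N := V ⊓ Cuvᗮ
  have hMC : M ≤ Cuvᗮ := inf_le_right
  have hNC : N ≤ Cuvᗮ := inf_le_right
  have hCM : Cuv ≤ Mᗮ := (Submodule.isOrtho_iff_le.mpr hMC).symm.le
  have hCN : Cuv ≤ Nᗮ := (Submodule.isOrtho_iff_le.mpr hNC).symm.le
  have hU : proj U = proj Cuv + proj M := proj_split inf_le_left
  have hV : proj V = proj Cuv + proj N := proj_split inf_le_right
  rw [hU, hV]
  exact sandwich_ring (proj_comp_ortho hCM) (proj_comp_ortho hMC)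
    (proj_comp_ortho hCN) (proj_comp_ortho hNC) (proj_idem Cuv)

lemma idem_mul_mul {R : Type*} [Ring R] {m : R} (h : m * m = m) (x : R) :
    m * (m * x) = m * x := by rw [← mul_assoc, h]

lemma mul_mul_zero {R : Type*} [Ring R] {c d : R} (h : c * d = 0) (x : R) :
    c * (d * x) = 0 := by rw [← mul_assoc, h, zero_mul]

lemma norm_sandwich_pow (U V : Submodule ℝ X) [CompleteSpace U] [CompleteSpace V]
    {n : ℕ} (hn : 1 ≤ n) :
    ‖(proj (V ⊓ (U ⊓ V)ᗮ) * proj (U ⊓ (U ⊓ V)ᗮ) * proj (V ⊓ (U ⊓ V)ᗮ)) ^ n‖ =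
      friedrichs U V ^ (2 * n) := by
  haveI : CompleteSpace (U ⊓ (U ⊓ V)ᗮ : Submodule ℝ X) := completeSpace_inf_orth U (U ⊓ V)
  haveI : CompleteSpace (V ⊓ (U ⊓ V)ᗮ : Submodule ℝ X) := completeSpace_inf_orth V (U ⊓ V)
  set M := U ⊓ (U ⊓ V)ᗮ
  set N := V ⊓ (U ⊓ V)ᗮ
  set B := proj M * proj N with hB
  have hstarB : star B = proj N * proj M := by
    rw [hB, star_mul, star_proj, star_proj]
  have hE : proj N * proj M * proj N = star B * B := by
    rw [hstarB, hB, mul_assoc (proj N) (proj M) (proj M * proj N),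
      idem_mul_mul (proj_idem M), ← mul_assoc]
  have hsa : IsSelfAdjoint (proj N * proj M * proj N) := by
    rw [hE]; exact IsSelfAdjoint.star_mul_self B
  have hnormE : ‖proj N * proj M * proj N‖ = friedrichs U V ^ 2 := by
    have hcs : ‖star B * B‖ = ‖B‖ * ‖B‖ := CStarRing.norm_star_mul_self
    rw [hE, hcs, friedrichs_eq U V, sq]
  rw [norm_pow_self_adjoint hsa hn, hnormE, ← pow_mul]

end DRAux

open DRAux in
/-- `‖(T T*)^n − P_{Fix T}‖ = c_F^{2n}` for every integer `n ≥ 1`. -/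
theorem norm_drOperator_mul_adjoint_pow_sub_proj_fixedSpace
    (U V : Submodule ℝ X) [CompleteSpace U] [CompleteSpace V] (n : ℕ) (hn : 1 ≤ n) :
    ‖(drOperator U V * ContinuousLinearMap.adjoint (drOperator U V)) ^ n -
        proj (fixedSpace (drOperator U V))‖ = friedrichs U V ^ (2 * n) := by
  haveI : CompleteSpace (U ⊓ (U ⊓ V)ᗮ : Submodule ℝ X) := completeSpace_inf_orth U (U ⊓ V)
  haveI : CompleteSpace (V ⊓ (U ⊓ V)ᗮ : Submodule ℝ X) := completeSpace_inf_orth V (U ⊓ V)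
  haveI : CompleteSpace (Uᗮ ⊓ (Uᗮ ⊓ Vᗮ)ᗮ : Submodule ℝ X) := completeSpace_inf_orth Uᗮ (Uᗮ ⊓ Vᗮ)
  haveI : CompleteSpace (Vᗮ ⊓ (Uᗮ ⊓ Vᗮ)ᗮ : Submodule ℝ X) := completeSpace_inf_orth Vᗮ (Uᗮ ⊓ Vᗮ)
  set C := U ⊓ V with hC
  set D := Uᗮ ⊓ Vᗮ with hD
  set M := U ⊓ Cᗮ with hM
  set N := V ⊓ Cᗮ with hN
  set M' := Uᗮ ⊓ Dᗮ with hM'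
  set N' := Vᗮ ⊓ Dᗮ with hN'
  set A₁ := proj V * proj U * proj V with hA₁
  set A₂ := proj Vᗮ * proj Uᗮ * proj Vᗮ with hA₂
  set E₁ := proj N * proj M * proj N with hE₁
  set E₂ := proj N' * proj M' * proj N' with hE₂
  have hCV : C ≤ V := inf_le_right
  have hCU : C ≤ U := inf_le_left
  have hDV : D ≤ Vᗮ := inf_le_right
  have hDU : D ≤ Uᗮ := inf_le_left
  -- rewrite the adjoint as star
  rw [← ContinuousLinearMap.star_eq_adjoint, drOperator_mul_star, proj_fixedSpace]
  -- A₁ and A₂ annihilate each other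
  have h12 : A₁ * A₂ = 0 := by
    rw [hA₁, hA₂]
    simp only [mul_assoc]
    rw [mul_mul_zero (proj_mul_proj_orth V), mul_zero, mul_zero]
  have h21 : A₂ * A₁ = 0 := by
    rw [hA₁, hA₂]
    simp only [mul_assoc]
    rw [mul_mul_zero (proj_orth_mul_proj V), mul_zero, mul_zero]
  have hpow : (A₁ + A₂) ^ n = A₁ ^ n + A₂ ^ n := add_pow_of_mul_eq_zero h12 h21 hn
  -- A₁ fixes proj C, A₂ fixes proj D
  have hA₁C : A₁ * proj C = proj C := by
    rw [hA₁]
    simp only [mul_assoc]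
    rw [proj_comp_left hCV, proj_comp_left hCU, proj_comp_left hCV]
  have hCA₁ : proj C * A₁ = proj C := by
    rw [hA₁]
    simp only [← mul_assoc]
    rw [proj_comp_right hCV, proj_comp_right hCU, proj_comp_right hCV]
  have hA₂D : A₂ * proj D = proj D := by
    rw [hA₂]
    simp only [mul_assoc]
    rw [proj_comp_left hDV, proj_comp_left hDU, proj_comp_left hDV]
  have hDA₂ : proj D * A₂ = proj D := by
    rw [hA₂]
    simp only [← mul_assoc]
    rw [proj_comp_right hDV, proj_comp_right hDU, proj_comp_right hDV]
  have hpow1 : (A₁ - proj C) ^ n = A₁ ^ n - proj C :=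
    sub_idem_pow hA₁C hCA₁ (proj_idem C) hn
  have hpow2 : (A₂ - proj D) ^ n = A₂ ^ n - proj D :=
    sub_idem_pow hA₂D hDA₂ (proj_idem D) hn
  have hE₁eq : A₁ - proj C = E₁ := sandwich_eq U V
  have hE₂eq : A₂ - proj D = E₂ := sandwich_eq Uᗮ Vᗮ
  have hmain : (A₁ + A₂) ^ n - (proj C + proj D) = E₁ ^ n + E₂ ^ n := by
    rw [hpow, ← hE₁eq, ← hE₂eq, hpow1, hpow2]
    abel
  rw [hmain]
  -- the two summands have orthogonal ranges
  obtain ⟨k, rfl⟩ : ∃ k, n = k + 1 := ⟨n - 1, by omega⟩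
  have hN_le_V : N ≤ V := inf_le_left
  have hN'_le_V : N' ≤ Vᗮ := inf_le_left
  have h₁ : ∀ x, (E₁ ^ (k + 1)) x ∈ V := by
    intro x
    rw [pow_succ']
    rw [ContinuousLinearMap.mul_apply]
    rw [hE₁, ContinuousLinearMap.mul_apply]
    exact hN_le_V (proj_apply_mem N _)
  have h₂ : ∀ x, (E₂ ^ (k + 1)) x ∈ Vᗮ := by
    intro x
    rw [pow_succ']
    rw [ContinuousLinearMap.mul_apply]
    rw [hE₂, ContinuousLinearMap.mul_apply]
    exact hN'_le_V (proj_apply_mem N' _)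
  have hk₁ : E₁ ^ (k + 1) * proj V = E₁ ^ (k + 1) := by
    have hE₁V : E₁ * proj V = E₁ := by
      rw [hE₁]
      simp only [mul_assoc]
      rw [proj_comp_right hN_le_V]
    rw [pow_succ, mul_assoc, hE₁V]
  have hk₂ : E₂ ^ (k + 1) * proj Vᗮ = E₂ ^ (k + 1) := by
    have hE₂V : E₂ * proj Vᗮ = E₂ := by
      rw [hE₂]
      simp only [mul_assoc]
      rw [proj_comp_right hN'_le_V]
    rw [pow_succ, mul_assoc, hE₂V]
  rw [norm_add_orthogonal h₁ h₂ hk₁ hk₂]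
  have g1 : ‖E₁ ^ (k + 1)‖ = friedrichs U V ^ (2 * (k + 1)) := by
    exact norm_sandwich_pow U V hn
  have g2 : ‖E₂ ^ (k + 1)‖ = friedrichs U V ^ (2 * (k + 1)) := by
    rw [← friedrichs_orth U V]; exact norm_sandwich_pow Uᗮ Vᗮ hn
  rw [g1, g2, max_self]
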